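/- Let n ≥ 2, N = n(n−1), and let u be a subword of λ̂_n with skip indices i_1 < ⋯ < i_s and skip reflections r^u = [r_1, …, r_s]. Then for every j ∈ {1, …, s} and every ℓ with i_j ≤ ℓ < i_{j+1} (where i_{s+1} := N+1), one has r_1 r_2 ⋯ r_j = (s_0 s_1 ⋯ s_{ℓ−1}) · u_{(ℓ)}^{−1}, where s_0 s_1 ⋯ s_{ℓ−1} is the product of the first ℓ letters of λ̂_n. -/

import Mathlib

/-- The affine reflection `((i,j))` of the affine symmetric group `W̃ₙ`, as a function
`ℤ → ℤ`: it interchanges `i + k*n` and `j + k*n` for every `k ∈ ℤ` and fixes all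
integers not congruent to `i` or `j` mod `n`. -/
def affRefl (n : ℕ) (i j : ℤ) : ℤ → ℤ := fun k =>
  if (k - i) % (n : ℤ) = 0 then k - i + j
  else if (k - j) % (n : ℤ) = 0 then k - j + i
  else k

/-- `t : ℤ → ℤ` is an affine reflection of `W̃ₙ`. -/
def IsAffRefl (n : ℕ) (t : ℤ → ℤ) : Prop :=
  ∃ i j : ℤ, (i - j) % (n : ℤ) ≠ 0 ∧ t = affRefl n i j

/-- The simple reflection `sⱼ = ((j, j+1))`. -/
def simpleRefl (n : ℕ) (j : ℤ) : ℤ → ℤ := affRefl n j (j + 1)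

/-- The translation `λₙ`: it sends `k ≡ 0 (mod n)` to `k - n(n-1)` and all other `k`
to `k + n`. -/
def lam (n : ℕ) : ℤ → ℤ := fun k =>
  if k % (n : ℤ) = 0 then k - (n : ℤ) * ((n : ℤ) - 1) else k + (n : ℤ)

/-- The product `r₁ r₂ ⋯ rₘ` of a list of elements, with `(w·v)(k) = w(v(k))`. -/
def listProd (l : List (ℤ → ℤ)) : ℤ → ℤ := l.foldr (· ∘ ·) id

/-- `l` is a factorization of `λₙ` into affine reflections. -/
def IsFactorization (n : ℕ) (l : List (ℤ → ℤ)) : Prop :=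
  (∀ t ∈ l, IsAffRefl n t) ∧ listProd l = lam n

/-- A tree-like factorization of `λₙ`: a factorization `[r₁, …, r_{2n-2}]` into `2n-2`
affine reflections such that there are integers `a₀, …, a_{2n-2}` and `b₁, …, b_{2n-2}`
with `r_k = ((a_{k-1}, b_k))`, `a_{k-1} < b_k` and `a_k ≡ b_k (mod n)`
(0-based: `r` at index `k` equals `((a k, b (k+1)))`). -/
def IsTreeLike (n : ℕ) (l : List (ℤ → ℤ)) : Prop :=
  IsFactorization n l ∧ l.length = 2 * n - 2 ∧
  ∃ a b : ℕ → ℤ, ∀ k : ℕ, ∀ h : k < l.length,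
    l.get ⟨k, h⟩ = affRefl n (a k) (b (k + 1)) ∧
    a k < b (k + 1) ∧ (a (k + 1) - b (k + 1)) % (n : ℤ) = 0

/-- `a₀ < a₁ < ⋯` is a strictly increasing endpoint sequence of the factorization `l`:
`r_ℓ = ((a_{ℓ-1}, a_ℓ))` (0-based: `r` at index `k` is `((a k, a (k+1)))`). -/
def EndSeq (n : ℕ) (l : List (ℤ → ℤ)) (a : ℕ → ℤ) : Prop :=
  ∀ k : ℕ, ∀ h : k < l.length,
    a k < a (k + 1) ∧ l.get ⟨k, h⟩ = affRefl n (a k) (a (k + 1))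

/-- The representative of `x` modulo `n` lying in `{1, …, n}`. -/
def resOne (n : ℕ) (x : ℤ) : ℤ := if x % (n : ℤ) = 0 then (n : ℤ) else x % (n : ℤ)

/-- `nb_k(r)` for the endpoint sequence `a` of a tree-like factorization of `λₙ`:
the list of the residues `a_i mod n` (representatives in `{1, …, n}`), in increasing
order of the index `i ∈ {1, …, 2n-2}`, over those `i` with `a_{i-1} ≡ k (mod n)`
(0-based: indices `i < 2n-2` with `a i ≡ k`, recording the residue of `a (i+1)`). -/
def nb (n : ℕ) (a : ℕ → ℤ) (k : ℤ) : List ℤ :=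
  ((List.range (2 * n - 2)).filter (fun i => decide ((a i - k) % (n : ℤ) = 0))).map
    (fun i => resOne n (a (i + 1)))

/-- A cyclic factorization of `λₙ`: a tree-like factorization such that, for an
endpoint sequence `a` as above, (i) `nb_n` is strictly increasing; and (ii) for each
`k ∈ {1, …, n-1}`, writing `nb_k = [c₁, …, c_ℓ]`, there is `j ∈ {1, …, ℓ}` with
`c_j < c_{j+1} < ⋯ < c_{ℓ-1} < k < c₁ < ⋯ < c_{j-1}`. -/
def IsCyclicFact (n : ℕ) (l : List (ℤ → ℤ)) : Prop :=
  IsTreeLike n l ∧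
  ∃ a : ℕ → ℤ, EndSeq n l a ∧
    List.Chain' (· < ·) (nb n a (n : ℤ)) ∧
    (∀ k : ℤ, 1 ≤ k → k ≤ (n : ℤ) - 1 →
      ∃ m : ℕ, m < (nb n a k).length ∧
        List.Chain' (· < ·)
          ((nb n a k).dropLast.drop m ++ k :: (nb n a k).dropLast.take m))

/-- The letter at (0-based) position `j` of the subword of `λ̂ₙ` with skip set `S`:
the identity `e` if `j` is a skip, and the simple reflection `sⱼ` otherwise. -/
def letterAt (n : ℕ) (S : Finset ℕ) (j : ℕ) : ℤ → ℤ :=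
  if j ∈ S then id else simpleRefl n (j : ℤ)

/-- The subword of the word `λ̂ₙ = [s₀, s₁, …, s_{n-1}]^{n-1}` (of length `N = n(n-1)`,
whose letter at 0-based position `j` is `s_j`) with skip set `S`. -/
def subword (n : ℕ) (S : Finset ℕ) : List (ℤ → ℤ) :=
  (List.range (n * (n - 1))).map (letterAt n S)

/-- `u_{(j)}`: the product of the first `j` letters of the subword. -/
def uPref (n : ℕ) (S : Finset ℕ) (j : ℕ) : ℤ → ℤ :=
  listProd ((subword n S).take j)

/-- `u_{(j)}⁻¹`: since every letter is an involution, the inverse of `u_{(j)}` is the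
product of the first `j` letters in reverse order. -/
def uPrefInv (n : ℕ) (S : Finset ℕ) (j : ℕ) : ℤ → ℤ :=
  listProd (((subword n S).take j).reverse)

/-- The element `t_{j+1} = u_{(j)} s_j u_{(j)}⁻¹` of `inv(u)` (0-based `j`). -/
def conjAt (n : ℕ) (S : Finset ℕ) (j : ℕ) : ℤ → ℤ :=
  uPref n S j ∘ simpleRefl n (j : ℤ) ∘ uPrefInv n S j

/-- The (0-based) skip indices of the subword, in increasing order. -/
def skipIdx (S : Finset ℕ) : List ℕ := S.sort (· ≤ ·)

/-- The sequence `r^u` of skip reflections of the subword with skip set `S`. -/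
def skipRefls (n : ℕ) (S : Finset ℕ) : List (ℤ → ℤ) :=
  (skipIdx S).map (conjAt n S)

/-- The subword with skip set `S` is a member of `S_n`: it is a subword of `λ̂ₙ`
with exactly `2n-2` skips whose product is the identity. -/
def SnMem (n : ℕ) (S : Finset ℕ) : Prop :=
  S ⊆ Finset.range (n * (n - 1)) ∧ S.card = 2 * n - 2 ∧ listProd (subword n S) = id

/-- The product of the suffix `r_{i+1} ⋯ r_m` (0-based: drops the first `i` factors). -/
def suffixProd (l : List (ℤ → ℤ)) (i : ℕ) : ℤ → ℤ := listProd (l.drop i)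

/-- The cyclic segment product `u_{a+1} u_{a+2} ⋯ u_{a+L}` of the subword with skip set
`S` (0-based starting position `a`, indices taken modulo `N = n(n-1)`). -/
def segProd (n : ℕ) (S : Finset ℕ) (a L : ℕ) : ℤ → ℤ :=
  listProd ((List.range L).map (fun t => letterAt n S ((a + t) % (n * (n - 1)))))

section Stmt8Aux

lemma listProd_nil : listProd [] = id := rfl

lemma listProd_cons (x : ℤ → ℤ) (l : List (ℤ → ℤ)) :
    listProd (x :: l) = x ∘ listProd l := rfl

lemma listProd_append (a b : List (ℤ → ℤ)) :
    listProd (a ++ b) = listProd a ∘ listProd b := by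
  induction a with
  | nil => rfl
  | cons x xs ih =>
    funext k
    simp [listProd_cons, ih, Function.comp]

lemma listProd_singleton (g : ℤ → ℤ) : listProd [g] = g := by
  funext k; rfl

lemma shift_mod (n : ℕ) (hn : 2 ≤ n) {x : ℤ} (h : x % (n : ℤ) = 0) :
    (x + 1) % (n : ℤ) = 1 := by
  obtain ⟨q, hq⟩ := Int.dvd_of_emod_eq_zero h
  have : x + 1 = 1 + (n : ℤ) * q := by omega
  rw [this, Int.add_mul_emod_self_left]
  exact Int.emod_eq_of_lt (by omega) (by exact_mod_cast hn)

lemma simpleRefl_spec1 (n : ℕ) (j k : ℤ) (h : (k - j) % (n : ℤ) = 0) :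
    simpleRefl n j k = k + 1 := by
  simp only [simpleRefl, affRefl, h, if_pos]
  ring

lemma simpleRefl_spec2 (n : ℕ) (hn : 2 ≤ n) (j k : ℤ)
    (h : (k - j - 1) % (n : ℤ) = 0) :
    simpleRefl n j k = k - 1 := by
  have h1 : (k - j) % (n : ℤ) ≠ 0 := by
    have e : k - j = (k - j - 1) + 1 := by ring
    rw [e, shift_mod n hn h]; omega
  have h2 : (k - (j + 1)) % (n : ℤ) = 0 := by
    have e : k - (j + 1) = k - j - 1 := by ring
    rw [e]; exact h
  simp only [simpleRefl, affRefl, h1, h2, if_neg, if_pos, if_false]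
  ring

lemma simpleRefl_spec3 (n : ℕ) (j k : ℤ)
    (h1 : (k - j) % (n : ℤ) ≠ 0) (h2 : (k - j - 1) % (n : ℤ) ≠ 0) :
    simpleRefl n j k = k := by
  have h2' : (k - (j + 1)) % (n : ℤ) ≠ 0 := by
    have e : k - (j + 1) = k - j - 1 := by ring
    rw [e]; exact h2
  simp only [simpleRefl, affRefl, h1, h2', if_neg, if_false]

lemma simpleRefl_invol (n : ℕ) (hn : 2 ≤ n) (j k : ℤ) :
    simpleRefl n j (simpleRefl n j k) = k := by
  by_cases h1 : (k - j) % (n : ℤ) = 0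
  · rw [simpleRefl_spec1 n j k h1]
    have h2 : (k + 1 - j - 1) % (n : ℤ) = 0 := by
      have e : k + 1 - j - 1 = k - j := by ring
      rw [e]; exact h1
    rw [simpleRefl_spec2 n hn j (k + 1) h2]; ring
  · by_cases h2 : (k - j - 1) % (n : ℤ) = 0
    · rw [simpleRefl_spec2 n hn j k h2]
      have h3 : (k - 1 - j) % (n : ℤ) = 0 := by
        have e : k - 1 - j = k - j - 1 := by ring
        rw [e]; exact h2
      rw [simpleRefl_spec1 n j (k - 1) h3]; ring
    · rw [simpleRefl_spec3 n j k h1 h2, simpleRefl_spec3 n j k h1 h2]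

lemma letterAt_invol (n : ℕ) (hn : 2 ≤ n) (S : Finset ℕ) (m : ℕ) (k : ℤ) :
    letterAt n S m (letterAt n S m k) = k := by
  unfold letterAt
  split_ifs with h
  · rfl
  · exact simpleRefl_invol n hn m k

lemma listProd_reverse_comp (l : List (ℤ → ℤ)) (h : ∀ g ∈ l, ∀ k, g (g k) = k) :
    ∀ k, listProd l.reverse (listProd l k) = k := by
  induction l with
  | nil => intro k; rfl
  | cons x xs ih =>
    intro k
    rw [List.reverse_cons, listProd_append, listProd_cons]
    show listProd xs.reverse (listProd [x] (x (listProd xs k))) = k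
    rw [listProd_singleton, h x (by simp) (listProd xs k)]
    exact ih (fun g hg => h g (by simp [hg])) k

lemma subword_take (n : ℕ) (S : Finset ℕ) (m : ℕ) (h : m ≤ n * (n - 1)) :
    (subword n S).take m = (List.range m).map (letterAt n S) := by
  rw [subword, ← List.map_take, List.take_range, Nat.min_eq_left h]

lemma uPref_eq (n : ℕ) (S : Finset ℕ) (m : ℕ) (h : m ≤ n * (n - 1)) :
    uPref n S m = listProd ((List.range m).map (letterAt n S)) := by
  rw [uPref, subword_take n S m h]

lemma uPrefInv_eq (n : ℕ) (S : Finset ℕ) (m : ℕ) (h : m ≤ n * (n - 1)) :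
    uPrefInv n S m = listProd (((List.range m).map (letterAt n S)).reverse) := by
  rw [uPrefInv, subword_take n S m h]

lemma uPrefInv_uPref (n : ℕ) (hn : 2 ≤ n) (S : Finset ℕ) (m : ℕ) (k : ℤ) :
    uPrefInv n S m (uPref n S m k) = k := by
  rw [uPref, uPrefInv]
  apply listProd_reverse_comp
  intro g hg k'
  have hg' : g ∈ subword n S := List.mem_of_mem_take hg
  obtain ⟨t, _, rfl⟩ := List.mem_map.mp hg'
  exact letterAt_invol n hn S t k'

/-- product of the first `ℓ` letters of `λ̂ₙ`. -/
def sPref (n : ℕ) (ℓ : ℕ) : ℤ → ℤ :=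
  listProd ((List.range ℓ).map (fun t => simpleRefl n (t : ℤ)))

/-- `(s₀ ⋯ s_{ℓ-1}) u_{(ℓ)}⁻¹`. -/
def Phi8 (n : ℕ) (S : Finset ℕ) (ℓ : ℕ) : ℤ → ℤ := sPref n ℓ ∘ uPrefInv n S ℓ

lemma sPref_succ (n : ℕ) (m : ℕ) :
    sPref n (m + 1) = sPref n m ∘ simpleRefl n (m : ℤ) := by
  unfold sPref
  simp only [bind_pure_comp, List.map_eq_map, List.map_map, List.range_succ,
    List.map_append, listProd_append, List.map_singleton, listProd_singleton]

lemma uPrefInv_succ (n : ℕ) (S : Finset ℕ) (m : ℕ) (h : m < n * (n - 1)) :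
    uPrefInv n S (m + 1) = letterAt n S m ∘ uPrefInv n S m := by
  rw [uPrefInv_eq n S (m + 1) h, uPrefInv_eq n S m (Nat.le_of_lt h),
    List.range_succ, List.map_append, List.reverse_append, listProd_append]
  simp [listProd_singleton]

lemma Phi8_zero (n : ℕ) (S : Finset ℕ) (k : ℤ) : Phi8 n S 0 k = k := rfl

lemma Phi8_skip (n : ℕ) (hn : 2 ≤ n) (S : Finset ℕ) (m : ℕ)
    (hm : m < n * (n - 1)) (hmS : m ∉ S) :
    Phi8 n S (m + 1) = Phi8 n S m := by
  funext k
  have hl : letterAt n S m = simpleRefl n (m : ℤ) := by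
    unfold letterAt; rw [if_neg hmS]
  simp only [Phi8, sPref_succ, uPrefInv_succ n S m hm, hl, Function.comp_apply]
  rw [simpleRefl_invol n hn (m : ℤ)]

lemma Phi8_take (n : ℕ) (hn : 2 ≤ n) (S : Finset ℕ) (m : ℕ)
    (hm : m < n * (n - 1)) (hmS : m ∈ S) :
    Phi8 n S (m + 1) = Phi8 n S m ∘ conjAt n S m := by
  funext k
  have hl : letterAt n S m = id := by unfold letterAt; rw [if_pos hmS]
  simp only [Phi8, sPref_succ, uPrefInv_succ n S m hm, hl, conjAt,
    Function.comp_apply, id_eq]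
  rw [uPrefInv_uPref n hn S m]

lemma Phi8_chain (n : ℕ) (hn : 2 ≤ n) (S : Finset ℕ) (a : ℕ) :
    ∀ b : ℕ, a ≤ b → b ≤ n * (n - 1) →
    (∀ m, a ≤ m → m < b → m ∉ S) → Phi8 n S b = Phi8 n S a := by
  intro b
  induction b with
  | zero =>
    intro h _ _
    have : a = 0 := by omega
    rw [this]
  | succ b ih =>
    intro hab hbN hnot
    rcases Nat.eq_or_lt_of_le hab with h | h
    · rw [h]
    · have hab' : a ≤ b := by omega
      rw [Phi8_skip n hn S b (by omega) (hnot b hab' (by omega))]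
      exact ih hab' (by omega) (fun m h1 h2 => hnot m h1 (by omega))

lemma take_succ_get {α : Type*} (l : List α) (j : ℕ) (h : j < l.length) :
    l.take (j + 1) = l.take j ++ [l.get ⟨j, h⟩] := by
  rw [List.take_succ, List.getElem?_eq_getElem h]
  rfl

lemma skipIdx_mem (S : Finset ℕ) (m : ℕ) : m ∈ skipIdx S ↔ m ∈ S :=
  Finset.mem_sort _

lemma skipIdx_strictMono (S : Finset ℕ) : StrictMono (skipIdx S).get := by
  have := Finset.sortedLT_sort S
  exact List.SortedLT.strictMono_get this

lemma not_mem_between (S : Finset ℕ) (j : ℕ) (hj : j < (skipIdx S).length) (m : ℕ)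
    (h1 : (skipIdx S).get ⟨j, hj⟩ < m)
    (h2 : ∀ hj1 : j + 1 < (skipIdx S).length, m < (skipIdx S).get ⟨j + 1, hj1⟩) :
    m ∉ S := by
  intro hm
  rw [← skipIdx_mem] at hm
  obtain ⟨t, ht⟩ := List.mem_iff_get.mp hm
  rcases le_or_gt t.1 j with h | h
  · have := (skipIdx_strictMono S).monotone (a := t) (b := ⟨j, hj⟩) (Fin.le_def.mpr h)
    omega
  · have hj1 : j + 1 < (skipIdx S).length := by omega
    have := (skipIdx_strictMono S).monotone (a := ⟨j + 1, hj1⟩) (b := t) (Fin.le_def.mpr h)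
    have := h2 hj1
    omega

lemma skipIdx_mem_get (S : Finset ℕ) (j : ℕ) (hj : j < (skipIdx S).length) :
    (skipIdx S).get ⟨j, hj⟩ ∈ S := by
  rw [← skipIdx_mem]
  exact List.get_mem _ _

lemma skipRefls_take_succ (n : ℕ) (S : Finset ℕ) (j : ℕ)
    (hj : j < (skipIdx S).length) :
    (skipRefls n S).take (j + 1)
      = (skipRefls n S).take j ++ [conjAt n S ((skipIdx S).get ⟨j, hj⟩)] := by
  have hlen : j < (skipRefls n S).length := by
    rw [skipRefls, List.length_map]; exact hj
  rw [take_succ_get _ j hlen]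
  congr 1
  simp [skipRefls]

end Stmt8Aux


/-- For a subword `u` of `λ̂ₙ` with skip indices `i₁ < ⋯ < i_s` and skip
reflections `r^u = [r₁, …, r_s]`: for every `j` and every (1-based) `ℓ` with
`i_j ≤ ℓ < i_{j+1}` (where `i_{s+1} = N + 1`), one has
`r₁ ⋯ r_j = (s₀ s₁ ⋯ s_{ℓ-1}) · u_{(ℓ)}⁻¹`.  (Here `j` is 0-based, so `r₁ ⋯ r_j`
is the product of the first `j+1` skip reflections, the 1-based skip index is
`(skipIdx S).get ⟨j, hj⟩ + 1`, and `u_{(ℓ)}⁻¹` is the reversed prefix product.) -/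
theorem stmt8 (n : ℕ) (hn : 2 ≤ n) (S : Finset ℕ)
    (hS : S ⊆ Finset.range (n * (n - 1))) :
    ∀ j : ℕ, ∀ hj : j < (skipIdx S).length, ∀ ℓ : ℕ, ℓ ≤ n * (n - 1) →
      (skipIdx S).get ⟨j, hj⟩ + 1 ≤ ℓ →
      (∀ hj1 : j + 1 < (skipIdx S).length, ℓ < (skipIdx S).get ⟨j + 1, hj1⟩ + 1) →
      listProd ((skipRefls n S).take (j + 1))
        = listProd ((List.range ℓ).map (fun t => simpleRefl n (t : ℤ)))
            ∘ uPrefInv n S ℓ := by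
  intro j
  induction j with
  | zero =>
    intro hj ℓ hℓN hℓ1 hℓ2
    set i0 := (skipIdx S).get ⟨0, hj⟩ with hi0
    have hi0N : i0 < n * (n - 1) := by omega
    have hi0S : i0 ∈ S := skipIdx_mem_get S 0 hj
    have hmin : ∀ m : ℕ, m < i0 → m ∉ S := by
      intro m hm hmS
      rw [← skipIdx_mem] at hmS
      obtain ⟨t, ht⟩ := List.mem_iff_get.mp hmS
      have := (skipIdx_strictMono S).monotone (a := ⟨0, hj⟩) (b := t)
        (Fin.le_def.mpr (Nat.zero_le _))
      omega
    have h1 : Phi8 n S i0 = Phi8 n S 0 :=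
      Phi8_chain n hn S 0 i0 (Nat.zero_le _) (Nat.le_of_lt hi0N)
        (fun m _ h2 => hmin m h2)
    have h2 : Phi8 n S (i0 + 1) = Phi8 n S i0 ∘ conjAt n S i0 :=
      Phi8_take n hn S i0 hi0N hi0S
    have h3 : Phi8 n S ℓ = Phi8 n S (i0 + 1) := by
      apply Phi8_chain n hn S (i0 + 1) ℓ hℓ1 hℓN
      intro m hm1 hm2
      apply not_mem_between S 0 hj m (by omega)
      intro hj1
      have := hℓ2 hj1
      omega
    have hgoal : listProd ((skipRefls n S).take 1) = conjAt n S i0 := by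
      rw [skipRefls_take_succ n S 0 hj, List.take_zero, List.nil_append,
        listProd_singleton]
    show listProd ((skipRefls n S).take 1) = Phi8 n S ℓ
    rw [hgoal, h3, h2, h1]
    funext k
    simp [Phi8_zero]
  | succ j ih =>
    intro hj ℓ hℓN hℓ1 hℓ2
    have hjlen : j < (skipIdx S).length := by omega
    set ij1 := (skipIdx S).get ⟨j + 1, hj⟩ with hij1
    have hij1N : ij1 < n * (n - 1) := by omega
    have hij1S : ij1 ∈ S := skipIdx_mem_get S (j + 1) hj
    have hlt : (skipIdx S).get ⟨j, hjlen⟩ < ij1 :=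
      skipIdx_strictMono S (by exact Nat.lt_succ_self j)
    have hprev : listProd ((skipRefls n S).take (j + 1))
        = Phi8 n S ij1 := by
      apply ih hjlen ij1 (Nat.le_of_lt hij1N) (by omega)
      intro hj1
      omega
    have h2 : Phi8 n S (ij1 + 1) = Phi8 n S ij1 ∘ conjAt n S ij1 :=
      Phi8_take n hn S ij1 hij1N hij1S
    have h3 : Phi8 n S ℓ = Phi8 n S (ij1 + 1) := by
      apply Phi8_chain n hn S (ij1 + 1) ℓ hℓ1 hℓN
      intro m hm1 hm2
      apply not_mem_between S (j + 1) hj m (by omega)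
      intro hj1
      have := hℓ2 hj1
      omega
    show listProd ((skipRefls n S).take (j + 2)) = Phi8 n S ℓ
    rw [skipRefls_take_succ n S (j + 1) hj, listProd_append, listProd_singleton,
      hprev, h3, h2]
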